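/- Let S be a dense subsemigroup of ((0,∞),+), let α, δ be positive ordinals, and let A be an admissible α×δ matrix. The following are equivalent: (a) whenever T ⊆ S is thick near zero and T is finitely colored, there exists x⃗ ∈ S^δ such that the entries of Ax⃗ are monochromatic; (b) for every minimal left ideal L of O⁺(S), L ∩ I₀(A;S) ≠ ∅; (c) for every left ideal L of O⁺(S), L ∩ I₀(A;S) ≠ ∅. -/
import Mathlib


noncomputable section

/-- Addition of ultrafilters on ℝ: `B ∈ uAdd p q ↔ {x | {y | x + y ∈ B} ∈ q} ∈ p`. -/
def uAdd (p q : Ultrafilter ℝ) : Ultrafilter ℝ :=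
  p.bind fun x => q.map fun y => x + y

/-- `S` is a subsemigroup of `((0,∞),+)`. -/
def IsPosSubsemigroup (S : Set ℝ) : Prop :=
  S.Nonempty ∧ S ⊆ Set.Ioi 0 ∧ ∀ x ∈ S, ∀ y ∈ S, x + y ∈ S

/-- `0` is a limit point of `S`. -/
def DenseNearZero (S : Set ℝ) : Prop := ∀ ε > 0, ∃ x ∈ S, x < ε

/-- the `i`-th entry of `A x⃗`. -/
def mEntry {ι κ : Type} (A : ι → κ → ℚ) (x : κ → ℝ) (i : ι) : ℝ :=
  ∑ᶠ j, (A i j : ℝ) * x j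

/-- admissible matrix: no zero row, finitely many nonzero entries in each row. -/
def Admissible {ι κ : Type} (A : ι → κ → ℚ) : Prop :=
  (∀ i, A i ≠ 0) ∧ ∀ i, (Function.support (A i)).Finite

/-- `A` is image partition regular over `S`. -/
def IPRover {ι κ : Type} (S : Set ℝ) (A : ι → κ → ℚ) : Prop :=
  ∀ (k : ℕ) (c : ℝ → Fin (k + 1)), ∃ x : κ → ℝ, (∀ j, x j ∈ S) ∧
    ∃ m : Fin (k + 1), ∀ i, mEntry A x i ∈ S \ {0} ∧ c (mEntry A x i) = m

/-- `A` is image partition regular near zero over `S`. -/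
def IPRNearZero {ι κ : Type} (S : Set ℝ) (A : ι → κ → ℚ) : Prop :=
  ∀ (k : ℕ) (c : ℝ → Fin (k + 1)), ∀ δ > (0 : ℝ), ∃ x : κ → ℝ, (∀ j, x j ∈ S) ∧
    ∃ m : Fin (k + 1), ∀ i, mEntry A x i ∈ S \ {0} ∧
      mEntry A x i ∈ Set.Ioo 0 δ ∧ c (mEntry A x i) = m

/-- `I(A;S)`. -/
def ISet {ι κ : Type} (S : Set ℝ) (A : ι → κ → ℚ) : Set (Ultrafilter ℝ) :=
  {p | S ∈ p ∧ ∀ P ∈ p, ∃ x : κ → ℝ, (∀ j, x j ∈ S) ∧ ∀ i, mEntry A x i ∈ P}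

/-- `O⁺(S)`. -/
def Oplus (S : Set ℝ) : Set (Ultrafilter ℝ) :=
  {p | ∀ ε > (0 : ℝ), Set.Ioo 0 ε ∩ S ∈ p}

/-- `I₀(A;S)`. -/
def I0Set {ι κ : Type} (S : Set ℝ) (A : ι → κ → ℚ) : Set (Ultrafilter ℝ) :=
  {p | S ∈ p ∧ ∀ P ∈ p, ∀ ε > (0 : ℝ), ∃ x : κ → ℝ, (∀ j, x j ∈ S) ∧
      ∀ i, mEntry A x i ∈ P ∩ Set.Ioo 0 ε}

/-- multiplication of an ultrafilter by a real constant. -/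
def mulU (c : ℝ) (p : Ultrafilter ℝ) : Ultrafilter ℝ := p.map fun x => c * x

/-- `q·p = q-lim_{n} (n·p)` for `q ∈ βℕ`, `p ∈ βℝ`. -/
def actU (q : Ultrafilter ℕ) (p : Ultrafilter ℝ) : Ultrafilter ℝ :=
  q.bind fun n => p.map fun x => (n : ℝ) * x

/-- `I` is a two-sided ideal of `T ⊆ βℝ`. -/
def IsIdealIn (T I : Set (Ultrafilter ℝ)) : Prop :=
  I.Nonempty ∧ I ⊆ T ∧ ∀ p ∈ T, ∀ q ∈ I, uAdd p q ∈ I ∧ uAdd q p ∈ I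

/-- the smallest two-sided ideal of `T`. -/
def KK (T : Set (Ultrafilter ℝ)) : Set (Ultrafilter ℝ) :=
  ⋂₀ {I | IsIdealIn T I}

/-- `L` is a left ideal of `T`. -/
def IsLeftIdealIn (T L : Set (Ultrafilter ℝ)) : Prop :=
  L.Nonempty ∧ L ⊆ T ∧ ∀ p ∈ T, ∀ q ∈ L, uAdd p q ∈ L

/-- `L` is a minimal left ideal of `T`. -/
def IsMinLeftIdealIn (T L : Set (Ultrafilter ℝ)) : Prop :=
  IsLeftIdealIn T L ∧ ∀ L', IsLeftIdealIn T L' → L' ⊆ L → L' = L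

/-- `C ⊆ S` is central near zero. -/
def CentralNearZero (S C : Set ℝ) : Prop :=
  ∃ p : Ultrafilter ℝ, p ∈ KK (Oplus S) ∧ uAdd p p = p ∧ C ∈ p

/-- `C` is central* near zero: it belongs to every minimal idempotent of `O⁺(S)`. -/
def CentralStarNearZero (S C : Set ℝ) : Prop :=
  ∀ p : Ultrafilter ℝ, p ∈ KK (Oplus S) → uAdd p p = p → C ∈ p

/-- `C` is IP* near zero: it belongs to every idempotent of `O⁺(S)`. -/
def IPStarNearZero (S C : Set ℝ) : Prop :=
  ∀ p : Ultrafilter ℝ, p ∈ Oplus S → uAdd p p = p → C ∈ p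

/-- `A` is centrally image partition regular near zero over `S`. -/
def CIPRNearZero {ι κ : Type} (S : Set ℝ) (A : ι → κ → ℚ) : Prop :=
  ∀ C : Set ℝ, CentralNearZero S C →
    ∃ x : κ → ℝ, (∀ j, x j ∈ S) ∧ ∀ i, mEntry A x i ∈ C

/-- `T` is thick near zero in `S`. -/
def ThickNearZero (S T : Set ℝ) : Prop :=
  ∃ L : Set (Ultrafilter ℝ), IsLeftIdealIn (Oplus S) L ∧ ∀ p ∈ L, T ∈ p

/-- membership in the class `𝓜₀(S)`. -/
def MemM0 {ι κ : Type} (S : Set ℝ) (A : ι → κ → ℚ) : Prop :=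
  Admissible A ∧ ∀ T : Set ℝ, ThickNearZero S T →
    ∀ (k : ℕ) (c : ℝ → Fin (k + 1)), ∃ x : κ → ℝ, (∀ j, x j ∈ S) ∧
      ∃ m : Fin (k + 1), ∀ i, mEntry A x i ∈ T ∧ c (mEntry A x i) = m

/-- `A` is (finite) image partition regular (over ℕ). -/
def IPRoverNat {u v : ℕ} (A : Fin u → Fin v → ℚ) : Prop :=
  ∀ (k : ℕ) (c : ℕ → Fin (k + 1)), ∃ x : Fin v → ℕ, ∃ m : Fin (k + 1),
    ∀ i, ∃ n : ℕ, 0 < n ∧ (n : ℚ) = ∑ j, A i j * (x j : ℚ) ∧ c n = m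

/-- the compressed form of a finitely supported integer vector: delete the zeros,
then collapse equal consecutive entries. -/
def compress (r : ℕ → ℤ) (hr : (Function.support r).Finite) : List ℤ :=
  ((hr.toFinset.sort (· ≤ ·)).map r).destutter (· ≠ ·)

/-- `M` is the Milliken–Taylor matrix `MT(a⃗)`: its rows are exactly the finitely
supported integer vectors with compressed form `a⃗`. -/
def IsMTMatrix (a : List ℤ) (M : ℕ → ℕ → ℚ) : Prop :=
  (∀ i, ∃ (r : ℕ → ℤ) (hr : (Function.support r).Finite),
      (M i = fun j => (r j : ℚ)) ∧ compress r hr = a) ∧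
  ∀ (r : ℕ → ℤ) (hr : (Function.support r).Finite),
    compress r hr = a → ∃ i, M i = fun j => (r j : ℚ)

/-- the sum `f 0 + (f 1 + (⋯ + f k))` in `(βℝ, +)`. -/
def finSumU : ∀ {k : ℕ}, (Fin (k + 1) → Ultrafilter ℝ) → Ultrafilter ℝ
  | 0, f => f 0
  | _ + 1, f => uAdd (f 0) (finSumU fun i => f i.succ)

end

lemma mem_uAdd {p q : Ultrafilter ℝ} {s : Set ℝ} :
    s ∈ uAdd p q ↔ {x | {y | x + y ∈ s} ∈ q} ∈ p := Iff.rfl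

lemma uAdd_assoc (p q r : Ultrafilter ℝ) : uAdd (uAdd p q) r = uAdd p (uAdd q r) := by
  apply Ultrafilter.coe_injective
  apply Filter.ext
  intro s
  show s ∈ uAdd (uAdd p q) r ↔ s ∈ uAdd p (uAdd q r)
  simp only [mem_uAdd, Set.mem_setOf_eq, add_assoc]

lemma continuous_uAdd_right (q : Ultrafilter ℝ) : Continuous (fun p => uAdd p q) := by
  rw [ultrafilterBasis_is_basis.continuous_iff]
  rintro t ⟨s, rfl⟩
  have : (fun p => uAdd p q) ⁻¹' {u | s ∈ u} = {u : Ultrafilter ℝ | {x | {y | x + y ∈ s} ∈ q} ∈ u} := rfl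
  rw [this]
  exact ultrafilter_isOpen_basic _

lemma oplus_isClosed (S : Set ℝ) : IsClosed (Oplus S) := by
  have : Oplus S = ⋂ ε ∈ {ε : ℝ | 0 < ε}, {p : Ultrafilter ℝ | Set.Ioo 0 ε ∩ S ∈ p} := by
    ext p; simp [Oplus]
  rw [this]
  exact isClosed_biInter fun ε _ => ultrafilter_isClosed_basic _

lemma S_mem_of_oplus {S : Set ℝ} {p : Ultrafilter ℝ} (hp : p ∈ Oplus S) : S ∈ p :=
  p.toFilter.mem_of_superset (hp 1 one_pos) Set.inter_subset_right

lemma oplus_nonempty {S : Set ℝ} (hS : IsPosSubsemigroup S) (hd : DenseNearZero S) :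
    (Oplus S).Nonempty := by
  have hne : (nhdsWithin (0:ℝ) (Set.Ioi 0) ⊓ Filter.principal S).NeBot := by
    rw [Filter.inf_principal_neBot_iff]
    intro U hU
    rcases (nhdsGT_basis (0:ℝ)).mem_iff.mp hU with ⟨ε, hε, hsub⟩
    rcases hd ε hε with ⟨x, hxS, hxε⟩
    exact ⟨x, hsub ⟨hS.2.1 hxS, hxε⟩, hxS⟩
  refine ⟨Ultrafilter.of (nhdsWithin (0:ℝ) (Set.Ioi 0) ⊓ Filter.principal S), fun ε hε => ?_⟩
  exact Ultrafilter.of_le _ (Filter.inter_mem_inf (Ioo_mem_nhdsGT_of_mem ⟨le_refl _, hε⟩)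
    (Filter.mem_principal_self S))

lemma oplus_add {S : Set ℝ} (hS : IsPosSubsemigroup S) {p q : Ultrafilter ℝ}
    (hp : p ∈ Oplus S) (hq : q ∈ Oplus S) : uAdd p q ∈ Oplus S := by
  intro ε hε
  rw [mem_uAdd]
  refine p.toFilter.mem_of_superset (hp ε hε) ?_
  rintro x ⟨⟨hx0, hxε⟩, hxS⟩
  refine q.toFilter.mem_of_superset (hq (ε - x) (by linarith)) ?_
  rintro y ⟨⟨hy0, hyε⟩, hyS⟩
  exact ⟨⟨by positivity, by linarith⟩, hS.2.2 x hxS y hyS⟩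

lemma image_left_ideal {S : Set ℝ} (hS : IsPosSubsemigroup S) (hd : DenseNearZero S)
    {L : Set (Ultrafilter ℝ)} {q : Ultrafilter ℝ} (hL : IsLeftIdealIn (Oplus S) L)
    (hq : q ∈ L) :
    IsLeftIdealIn (Oplus S) ((fun p => uAdd p q) '' Oplus S) ∧
      IsClosed ((fun p => uAdd p q) '' Oplus S) ∧ (fun p => uAdd p q) '' Oplus S ⊆ L := by
  have hqO : q ∈ Oplus S := hL.2.1 hq
  refine ⟨⟨?_, ?_, ?_⟩, ?_, ?_⟩
  · rcases oplus_nonempty hS hd with ⟨p, hp⟩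
    exact ⟨uAdd p q, ⟨p, hp, rfl⟩⟩
  · rintro r ⟨p, hp, rfl⟩
    exact oplus_add hS hp hqO
  · rintro p hp r ⟨p', hp', rfl⟩
    exact ⟨uAdd p p', oplus_add hS hp hp', uAdd_assoc p p' q⟩
  · exact (((oplus_isClosed S).isCompact).image (continuous_uAdd_right q)).isClosed
  · rintro r ⟨p, hp, rfl⟩
    exact hL.2.2 p hp q hq

lemma exists_min_left_ideal {S : Set ℝ} (hS : IsPosSubsemigroup S) (hd : DenseNearZero S)
    {L : Set (Ultrafilter ℝ)} (hL : IsLeftIdealIn (Oplus S) L) :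
    ∃ M, IsMinLeftIdealIn (Oplus S) M ∧ M ⊆ L ∧ IsClosed M := by
  rcases hL.1 with ⟨q, hq⟩
  set 𝒮 : Set (Set (Ultrafilter ℝ)) :=
    {M | IsLeftIdealIn (Oplus S) M ∧ IsClosed M ∧ M ⊆ L} with h𝒮
  obtain ⟨hN₁, hN₂, hN₃⟩ := image_left_ideal hS hd hL hq
  have hN : (fun p => uAdd p q) '' Oplus S ∈ 𝒮 := ⟨hN₁, hN₂, hN₃⟩
  have hchaincond : ∀ c ⊆ 𝒮, IsChain (· ⊆ ·) c → c.Nonempty →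
      ∃ lb ∈ 𝒮, ∀ s ∈ c, lb ⊆ s := by
    rintro c hc𝒮 hchain ⟨c₀, hc₀⟩
    refine ⟨⋂₀ c, ⟨⟨?_, ?_, ?_⟩, ?_, ?_⟩, fun s hs => Set.sInter_subset_of_mem hs⟩
    · haveI : Nonempty c := ⟨⟨c₀, hc₀⟩⟩
      apply IsCompact.nonempty_sInter_of_directed_nonempty_isCompact_isClosed
      · rintro x hx y hy
        rcases hchain.total hx hy with h | h
        · exact ⟨x, hx, Set.Subset.rfl, h⟩
        · exact ⟨y, hy, h, Set.Subset.rfl⟩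
      · exact fun U hU => (hc𝒮 hU).1.1
      · exact fun U hU => (hc𝒮 hU).2.1.isCompact
      · exact fun U hU => (hc𝒮 hU).2.1
    · exact (Set.sInter_subset_of_mem hc₀).trans (hc𝒮 hc₀).1.2.1
    · intro p hp r hr
      rw [Set.mem_sInter] at hr ⊢
      exact fun U hU => (hc𝒮 hU).1.2.2 p hp r (hr U hU)
    · exact isClosed_sInter fun U hU => (hc𝒮 hU).2.1
    · exact (Set.sInter_subset_of_mem hc₀).trans (hc𝒮 hc₀).2.2
  obtain ⟨M, hMN, hM𝒮, hMmin⟩ := zorn_superset_nonempty 𝒮 hchaincond _ hN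
  · refine ⟨M, ⟨hM𝒮.1, ?_⟩, hM𝒮.2.2, hM𝒮.2.1⟩
    intro L' hL' hL'M
    rcases hL'.1 with ⟨q', hq'⟩
    obtain ⟨hN'₁, hN'₂, hN'₃⟩ := image_left_ideal hS hd hL' hq'
    have hsub : (fun p => uAdd p q') '' Oplus S ⊆ M := hN'₃.trans hL'M
    have : M ⊆ (fun p => uAdd p q') '' Oplus S :=
      hMmin ⟨hN'₁, hN'₂, hN'₃.trans (hL'M.trans hM𝒮.2.2)⟩ hsub
    exact Set.Subset.antisymm hL'M (this.trans hN'₃)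

lemma min_left_ideal_isClosed {S : Set ℝ} (hS : IsPosSubsemigroup S) (hd : DenseNearZero S)
    {L : Set (Ultrafilter ℝ)} (hL : IsMinLeftIdealIn (Oplus S) L) : IsClosed L := by
  obtain ⟨M, hM, hML, hMc⟩ := exists_min_left_ideal hS hd hL.1
  rwa [hL.2 M hM.1 hML] at hMc

/-- For an admissible matrix `A`, the following are equivalent:
(a) every finite coloring of every thick-near-zero set contains a monochromatic image
of `A`; (b) every minimal left ideal of `O⁺(S)` meets `I₀(A;S)`; (c) every left ideal
of `O⁺(S)` meets `I₀(A;S)`. -/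
theorem stmt15 {ι κ : Type} [Countable ι] [Countable κ] [Nonempty ι] [Nonempty κ]
    (S : Set ℝ) (hS : IsPosSubsemigroup S) (hd : DenseNearZero S)
    (A : ι → κ → ℚ) (hA : Admissible A) :
    ((∀ T : Set ℝ, ThickNearZero S T → ∀ (k : ℕ) (c : ℝ → Fin (k + 1)),
        ∃ x : κ → ℝ, (∀ j, x j ∈ S) ∧ ∃ m : Fin (k + 1),
          ∀ i, mEntry A x i ∈ T ∧ c (mEntry A x i) = m) ↔
      (∀ L, IsMinLeftIdealIn (Oplus S) L → (L ∩ I0Set S A).Nonempty)) ∧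
    ((∀ L, IsMinLeftIdealIn (Oplus S) L → (L ∩ I0Set S A).Nonempty) ↔
      (∀ L, IsLeftIdealIn (Oplus S) L → (L ∩ I0Set S A).Nonempty)) := by
  have dir1 : (∀ L, IsMinLeftIdealIn (Oplus S) L → (L ∩ I0Set S A).Nonempty) →
      (∀ T : Set ℝ, ThickNearZero S T → ∀ (k : ℕ) (c : ℝ → Fin (k + 1)),
        ∃ x : κ → ℝ, (∀ j, x j ∈ S) ∧ ∃ m : Fin (k + 1),
          ∀ i, mEntry A x i ∈ T ∧ c (mEntry A x i) = m) := by
    intro hb T hT k c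
    rcases hT with ⟨L, hL, hLT⟩
    obtain ⟨M, hM, hML, -⟩ := exists_min_left_ideal hS hd hL
    rcases hb M hM with ⟨p, hpM, hpS, hpI⟩
    have hTp : T ∈ p := hLT p (hML hpM)
    have hpig : ∃ m : Fin (k + 1), c ⁻¹' {m} ∈ p := by
      by_contra h
      push_neg at h
      have h2 : ∀ m : Fin (k + 1), (c ⁻¹' {m})ᶜ ∈ p := fun m =>
        Ultrafilter.compl_mem_iff_notMem.mpr (h m)
      have h3 : (⋂ m : Fin (k + 1), (c ⁻¹' {m})ᶜ) ∈ p := by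
        exact Filter.iInter_mem.mpr h2
      rcases Ultrafilter.nonempty_of_mem h3 with ⟨y, hy⟩
      exact (Set.mem_iInter.mp hy (c y)) rfl
    rcases hpig with ⟨m, hm⟩
    have hP : (T ∩ c ⁻¹' {m}) ∈ p := Filter.inter_mem hTp hm
    rcases hpI (T ∩ c ⁻¹' {m}) hP 1 one_pos with ⟨x, hx, hax⟩
    exact ⟨x, hx, m, fun i => ⟨(hax i).1.1, (hax i).1.2⟩⟩
  have dir2 : (∀ T : Set ℝ, ThickNearZero S T → ∀ (k : ℕ) (c : ℝ → Fin (k + 1)),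
        ∃ x : κ → ℝ, (∀ j, x j ∈ S) ∧ ∃ m : Fin (k + 1),
          ∀ i, mEntry A x i ∈ T ∧ c (mEntry A x i) = m) →
      (∀ L, IsMinLeftIdealIn (Oplus S) L → (L ∩ I0Set S A).Nonempty) := by
    intro ha L hL
    by_contra hemp
    rw [Set.not_nonempty_iff_eq_empty] at hemp
    have hLclosed := min_left_ideal_isClosed hS hd hL
    have hLO : L ⊆ Oplus S := hL.1.2.1
    have hbad : ∀ q : L, ∃ P ∈ (q : Ultrafilter ℝ), ∃ ε > (0:ℝ), ∀ x : κ → ℝ,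
        (∀ j, x j ∈ S) → ∃ i, mEntry A x i ∉ P ∩ Set.Ioo 0 ε := by
      rintro ⟨q, hq⟩
      have hqI : q ∉ I0Set S A := fun h =>
        Set.eq_empty_iff_forall_notMem.mp hemp q ⟨hq, h⟩
      have hqS : S ∈ q := S_mem_of_oplus (hLO hq)
      simp only [I0Set, Set.mem_setOf_eq, not_and] at hqI
      have h2 := hqI hqS
      push_neg at h2
      exact h2
    choose P hPmem ε hεpos hbad using hbad
    have hcover : L ⊆ ⋃ i : L, {r : Ultrafilter ℝ | P i ∈ r} := fun q hq =>
      Set.mem_iUnion.mpr ⟨⟨q, hq⟩, hPmem ⟨q, hq⟩⟩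
    obtain ⟨t, ht⟩ := hLclosed.isCompact.elim_finite_subcover
      (fun i : L => {r : Ultrafilter ℝ | P i ∈ r})
      (fun i => ultrafilter_isOpen_basic _) hcover
    have htne : t.Nonempty := by
      rcases hL.1.1 with ⟨q0, hq0⟩
      rcases Set.mem_iUnion₂.mp (ht hq0) with ⟨i, hi, -⟩
      exact ⟨i, hi⟩
    obtain ⟨k, hk⟩ : ∃ k, t.card = k + 1 :=
      ⟨t.card - 1, (Nat.succ_pred_eq_of_pos (Finset.card_pos.mpr htne)).symm⟩
    set e : Fin (k + 1) → L := fun j => (t.equivFin.symm (Fin.cast hk.symm j)).1 with he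
    set Q : Fin (k + 1) → Set ℝ :=
      fun j => P (e j) ∩ Set.Ioo 0 (ε (e j)) with hQ
    have hQmem : ∀ r ∈ L, ∃ j, Q j ∈ r := by
      intro r hr
      rcases Set.mem_iUnion₂.mp (ht hr) with ⟨i, hi, hPi⟩
      refine ⟨Fin.cast hk (t.equivFin ⟨i, hi⟩), ?_⟩
      have hei : e (Fin.cast hk (t.equivFin ⟨i, hi⟩)) = i := by
        simp [he]
      show P (e (Fin.cast hk (t.equivFin ⟨i, hi⟩))) ∩
        Set.Ioo 0 (ε (e (Fin.cast hk (t.equivFin ⟨i, hi⟩)))) ∈ r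
      rw [hei]
      refine Filter.inter_mem hPi ?_
      exact r.toFilter.mem_of_superset ((hLO hr) _ (hεpos i)) Set.inter_subset_left
    have hthick : ThickNearZero S (⋃ j, Q j) := by
      refine ⟨L, hL.1, fun r hr => ?_⟩
      rcases hQmem r hr with ⟨j, hj⟩
      exact r.toFilter.mem_of_superset hj (Set.subset_iUnion Q j)
    classical
    set c : ℝ → Fin (k + 1) :=
      fun s => if h : ∃ j, s ∈ Q j then h.choose else 0 with hc
    obtain ⟨x, hx, m, hm⟩ := ha _ hthick k c
    have hQm : ∀ i, mEntry A x i ∈ Q m := by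
      intro i
      rcases Set.mem_iUnion.mp (hm i).1 with ⟨j, hj⟩
      have hex : ∃ j, mEntry A x i ∈ Q j := ⟨j, hj⟩
      have h1 : c (mEntry A x i) = hex.choose := dif_pos hex
      have h2 : m = hex.choose := by rw [← (hm i).2, h1]
      rw [h2]
      exact hex.choose_spec
    rcases hbad (e m) x hx with ⟨i, hi⟩
    exact hi (hQm i)
  refine ⟨⟨dir2, dir1⟩, ⟨?_, fun hc L hL => hc L hL.1⟩⟩
  intro hb L hL
  obtain ⟨M, hM, hML, -⟩ := exists_min_left_ideal hS hd hL
  rcases hb M hM with ⟨p, hpM, hpI⟩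
  exact ⟨p, hML hpM, hpI⟩
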